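/- For every R > 0 there exists M₀ > 0 such that for every M ≥ M₀ there exists N ∈ ℕ with: for all n ≥ N, the Lebesgue measure of A(n,M,R) := { a = (a₁,…,a_n) ∈ (ℝ²)ⁿ : Σ_{j=1}^n |a_j|² ≤ nR² and −Σ_{i≠j} ln|a_i − a_j| ≤ n(n−1)M } satisfies |A(n,M,R)| ≥ ½ |B^{2n}_{R√n}|, where B^{2n}_{R√n} is the Euclidean ball of radius R√n centered at 0 in ℝ^{2n}. -/

import Mathlib

open MeasureTheory Filter

noncomputable section

/-- The configuration space `(ℝ²)ⁿ ≅ ℝ^{2n}`, as a Euclidean space. -/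
abbrev Conf (n : ℕ) := EuclideanSpace ℝ (Fin n × Fin 2)

/-- The Euclidean distance `|a_i - a_j|` between the `i`-th and `j`-th planar points of a
configuration `a ∈ (ℝ²)ⁿ`. -/
def pd {n : ℕ} (a : Conf n) (i j : Fin n) : ℝ :=
  Real.sqrt (∑ k : Fin 2, (a (i,k) - a (j,k))^2)

/-- The set `A(n,M,R)` of configurations with second moment at most `nR²` and
logarithmic interaction energy at most `n(n-1)M`. -/
def Aset (n : ℕ) (M R : ℝ) : Set (Conf n) :=
  {a | (∑ i : Fin n, ∑ k : Fin 2, (a (i,k))^2) ≤ (n:ℝ) * R^2 ∧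
    -(∑ i : Fin n, ∑ j : Fin n, if i ≠ j then Real.log (pd a i j) else 0) ≤
      (n:ℝ) * ((n:ℝ)-1) * M}

open Set
open scoped ENNReal


lemma neg_log_le_rpow {x : ℝ} (hx : 0 < x) : -Real.log x ≤ 2 * x ^ (-(2⁻¹:ℝ)) := by
  have h1 : 0 < x ^ (-(2⁻¹:ℝ)) := Real.rpow_pos_of_pos hx _
  have h2 := Real.log_le_sub_one_of_pos h1
  rw [Real.log_rpow hx] at h2
  linarith

lemma lin1_half : ∫⁻ x in Set.Ici (0:ℝ), ENNReal.ofReal (-Real.log x) ≤ 4 := by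
  have hmono : ∀ x ∈ Set.Ici (0:ℝ), ENNReal.ofReal (-Real.log x) ≤
      (Set.Ioc (0:ℝ) 1).indicator (fun x => ENNReal.ofReal (2 * x ^ (-(2⁻¹:ℝ)))) x := by
    intro x hx
    by_cases hmem : x ∈ Set.Ioc (0:ℝ) 1
    · rw [Set.indicator_of_mem hmem]
      exact ENNReal.ofReal_le_ofReal (neg_log_le_rpow hmem.1)
    · rw [Set.indicator_of_notMem hmem]
      have : 0 ≤ Real.log x := by
        rcases eq_or_lt_of_le (Set.mem_Ici.mp hx : (0:ℝ) ≤ x) with h | h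
        · simp [← h]
        · have : 1 < x := by
            by_contra hle
            exact hmem ⟨h, le_of_not_gt hle⟩
          exact Real.log_nonneg this.le
      have h0 : ENNReal.ofReal (-Real.log x) = 0 := ENNReal.ofReal_eq_zero.mpr (by linarith)
      simp [h0]
  calc ∫⁻ x in Set.Ici (0:ℝ), ENNReal.ofReal (-Real.log x)
      ≤ ∫⁻ x in Set.Ici (0:ℝ), (Set.Ioc (0:ℝ) 1).indicator
          (fun x => ENNReal.ofReal (2 * x ^ (-(2⁻¹:ℝ)))) x := by
        refine setLIntegral_mono ?_ hmono
        exact (Measurable.indicator (by measurability) measurableSet_Ioc)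
    _ = ∫⁻ x in Set.Ioc (0:ℝ) 1, ENNReal.ofReal (2 * x ^ (-(2⁻¹:ℝ))) := by
        rw [lintegral_indicator measurableSet_Ioc, Measure.restrict_restrict measurableSet_Ioc,
          Set.inter_eq_left.mpr (fun x hx => hx.1.le)]
    _ = ENNReal.ofReal (∫ x in Set.Ioc (0:ℝ) 1, 2 * x ^ (-(2⁻¹:ℝ))) := by
        rw [← ofReal_integral_eq_lintegral_ofReal]
        · exact ((intervalIntegral.intervalIntegrable_rpow' (by norm_num)).const_mul 2).1
        · refine (ae_restrict_iff' measurableSet_Ioc).mpr (ae_of_all _ fun x hx => ?_)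
          exact mul_nonneg (by norm_num) (Real.rpow_nonneg hx.1.le _)
    _ ≤ 4 := by
        rw [← intervalIntegral.integral_of_le (by norm_num : (0:ℝ) ≤ 1)]
        rw [intervalIntegral.integral_const_mul, integral_rpow (Or.inl (by norm_num))]
        rw [Real.zero_rpow (by norm_num : (-(2⁻¹:ℝ)+1) ≠ 0), Real.one_rpow]
        norm_num


lemma lin1 : ∫⁻ x : ℝ, ENNReal.ofReal (-Real.log |x|) ≤ 8 := by
  have hIci : ∫⁻ x in Set.Ici (0:ℝ), ENNReal.ofReal (-Real.log |x|) ≤ 4 := by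
    have : ∀ x ∈ Set.Ici (0:ℝ), ENNReal.ofReal (-Real.log |x|) = ENNReal.ofReal (-Real.log x) := by
      intro x hx; rw [abs_of_nonneg hx]
    rw [setLIntegral_congr_fun measurableSet_Ici this]
    exact lin1_half
  have hIio : ∫⁻ x in Set.Iio (0:ℝ), ENNReal.ofReal (-Real.log |x|) ≤ 4 := by
    have hmp := Measure.measurePreserving_neg (volume : Measure ℝ)
    have := setLIntegral_map (μ := (volume : Measure ℝ)) (s := Set.Iio (0:ℝ))
      (f := fun x : ℝ => ENNReal.ofReal (-Real.log |x|)) (g := fun x : ℝ => -x)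
      measurableSet_Iio (by measurability) measurable_neg
    rw [hmp.map_eq] at this
    rw [this]
    have hpre : (fun x : ℝ => -x) ⁻¹' (Set.Iio 0) = Set.Ioi 0 := by
      ext x; simp
    rw [hpre]
    calc ∫⁻ x in Set.Ioi (0:ℝ), ENNReal.ofReal (-Real.log |-x|)
        = ∫⁻ x in Set.Ioi (0:ℝ), ENNReal.ofReal (-Real.log |x|) := by
          congr 1; ext x; rw [abs_neg]
      _ ≤ ∫⁻ x in Set.Ici (0:ℝ), ENNReal.ofReal (-Real.log |x|) :=
          lintegral_mono_set Set.Ioi_subset_Ici_self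
      _ ≤ 4 := hIci
  calc ∫⁻ x : ℝ, ENNReal.ofReal (-Real.log |x|)
      = (∫⁻ x in Set.Ici (0:ℝ), ENNReal.ofReal (-Real.log |x|)) +
        ∫⁻ x in (Set.Ici (0:ℝ))ᶜ, ENNReal.ofReal (-Real.log |x|) :=
        (lintegral_add_compl _ measurableSet_Ici).symm
    _ ≤ 4 + 4 := by
        rw [Set.compl_Ici]
        exact add_le_add hIci hIio
    _ = 8 := by norm_num

lemma lin1' (c : ℝ) : ∫⁻ x : ℝ, ENNReal.ofReal (-Real.log |x - c|) ≤ 8 := by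
  have := lintegral_sub_right_eq_self (μ := (volume : Measure ℝ))
    (fun x : ℝ => ENNReal.ofReal (-Real.log |x|)) c
  rw [this]
  exact lin1


lemma l2 (c₀ c₁ : ℝ) :
    ∫⁻ z : ℝ × ℝ, ENNReal.ofReal (-Real.log (Real.sqrt ((z.1 - c₀)^2 + (z.2 - c₁)^2))) ≤ 16 := by
  have hmeas : Measurable fun z : ℝ × ℝ =>
      ENNReal.ofReal (-Real.log (Real.sqrt ((z.1 - c₀)^2 + (z.2 - c₁)^2))) := by
    have h1 : Measurable fun z : ℝ × ℝ => (z.1 - c₀)^2 + (z.2 - c₁)^2 :=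
      ((measurable_fst.sub measurable_const).pow_const 2).add
        ((measurable_snd.sub measurable_const).pow_const 2)
    exact (Real.measurable_log.comp (Real.continuous_sqrt.measurable.comp h1)).neg.ennreal_ofReal
  rw [Measure.volume_eq_prod, lintegral_prod _ hmeas.aemeasurable]
  have hae : ∀ᵐ u : ℝ, u ≠ c₀ := by
    rw [ae_iff]
    have : {u : ℝ | ¬ u ≠ c₀} = {c₀} := by ext u; simp
    rw [this]
    exact measure_singleton c₀
  calc ∫⁻ u : ℝ, ∫⁻ v : ℝ, ENNReal.ofReal (-Real.log (Real.sqrt ((u - c₀)^2 + (v - c₁)^2)))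
      ≤ ∫⁻ u : ℝ, 2 * ENNReal.ofReal (-Real.log |u - c₀|) := by
        refine lintegral_mono_ae (hae.mono fun u hu => ?_)
        calc ∫⁻ v : ℝ, ENNReal.ofReal (-Real.log (Real.sqrt ((u - c₀)^2 + (v - c₁)^2)))
            ≤ ∫⁻ v : ℝ, (Metric.closedBall c₁ 1).indicator
                (fun _ => ENNReal.ofReal (-Real.log |u - c₀|)) v := by
              refine lintegral_mono fun v => ?_
              set s := Real.sqrt ((u - c₀)^2 + (v - c₁)^2) with hs
              have hle0 : |u - c₀| ≤ s := by
                rw [← Real.sqrt_sq_eq_abs]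
                exact Real.sqrt_le_sqrt (by nlinarith [sq_nonneg (v - c₁)])
              have hle1 : |v - c₁| ≤ s := by
                rw [← Real.sqrt_sq_eq_abs]
                exact Real.sqrt_le_sqrt (by nlinarith [sq_nonneg (u - c₀)])
              by_cases h1 : 1 ≤ s
              · have : ENNReal.ofReal (-Real.log s) = 0 :=
                  ENNReal.ofReal_eq_zero.mpr (by linarith [Real.log_nonneg h1])
                rw [this]; exact zero_le
              · push_neg at h1
                have hv : v ∈ Metric.closedBall c₁ 1 := by
                  rw [Metric.mem_closedBall, Real.dist_eq]
                  linarith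
                rw [Set.indicator_of_mem hv]
                refine ENNReal.ofReal_le_ofReal (neg_le_neg ?_)
                exact Real.log_le_log (abs_pos.mpr (sub_ne_zero.mpr hu)) hle0
          _ = ENNReal.ofReal (-Real.log |u - c₀|) * volume (Metric.closedBall c₁ 1) :=
              lintegral_indicator_const measurableSet_closedBall _
          _ = 2 * ENNReal.ofReal (-Real.log |u - c₀|) := by
              rw [Real.volume_closedBall]
              rw [mul_comm]
              norm_num
    _ = 2 * ∫⁻ u : ℝ, ENNReal.ofReal (-Real.log |u - c₀|) := by
        rw [lintegral_const_mul]
        exact (Real.measurable_log.comp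
          ((measurable_id.sub measurable_const).abs)).neg.ennreal_ofReal
    _ ≤ 2 * 8 := by
        exact mul_le_mul_right (lin1' c₀) 2
    _ = 16 := by norm_num


def kap {n : ℕ} (i : Fin n) : Fin 2 ≃ {q : Fin n × Fin 2 // ¬ q.1 ≠ i} where
  toFun k := ⟨(i, k), by simp⟩
  invFun q := q.1.2
  left_inv k := rfl
  right_inv q := by
    rcases q with ⟨⟨a, b⟩, h⟩
    simp only [ne_eq, not_not] at h
    subst h
    rfl

lemma meas_eval {n : ℕ} (q : Fin n × Fin 2) : Measurable fun a : Conf n => a q :=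
  (measurable_pi_apply q).comp ((MeasurableEquiv.toLp 2 ((Fin n × Fin 2) → ℝ)).symm).measurable

lemma pd_measurable {n : ℕ} (i j : Fin n) :
    Measurable fun a : Conf n => ENNReal.ofReal (-Real.log (pd a i j)) := by
  have h1 : Measurable fun a : Conf n => ∑ k : Fin 2, (a (i,k) - a (j,k))^2 :=
    Finset.measurable_sum _ fun k _ => ((meas_eval (i,k)).sub (meas_eval (j,k))).pow_const 2
  exact (Real.measurable_log.comp (Real.continuous_sqrt.measurable.comp h1)).neg.ennreal_ofReal

lemma pair_bound {n : ℕ} (i j : Fin n) (hij : i ≠ j) (r : ℝ) :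
    ∫⁻ a in Metric.ball (0 : Conf n) r, ENNReal.ofReal (-Real.log (pd a i j)) ≤
      16 * volume {y : {q : Fin n × Fin 2 // q.1 ≠ i} → ℝ | ∑ q, (y q)^2 < r^2} := by
  classical
  set G : Conf n → ℝ≥0∞ :=
    (Metric.ball (0 : Conf n) r).indicator (fun a => ENNReal.ofReal (-Real.log (pd a i j)))
    with hG
  have hGmeas : Measurable G := (pd_measurable i j).indicator measurableSet_ball
  set S' : Set ({q : Fin n × Fin 2 // q.1 ≠ i} → ℝ) := {y | ∑ q, (y q)^2 < r^2} with hS'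
  have hS'meas : MeasurableSet S' :=
    measurableSet_lt (Finset.measurable_sum _ fun q _ => (measurable_pi_apply q).pow_const 2)
      measurable_const
  set T : (({q : Fin n × Fin 2 // q.1 ≠ i} → ℝ) × (ℝ × ℝ)) → Conf n := fun w =>
    ((MeasurableEquiv.toLp 2 ((Fin n × Fin 2) → ℝ)).symm).symm
      ((MeasurableEquiv.piEquivPiSubtypeProd (fun _ : Fin n × Fin 2 => ℝ)
          (fun q => q.1 ≠ i)).symm
        (w.1, MeasurableEquiv.piCongrLeft (fun _ : {q : Fin n × Fin 2 // ¬ q.1 ≠ i} => ℝ)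
          (kap i) (MeasurableEquiv.finTwoArrow.symm w.2)))
  have hT : MeasurePreserving T volume volume := by
    have m1 : MeasurePreserving (MeasurableEquiv.finTwoArrow (α := ℝ)).symm volume volume :=
      (volume_preserving_finTwoArrow ℝ).symm _
    have m2 := volume_measurePreserving_piCongrLeft
      (fun _ : {q : Fin n × Fin 2 // ¬ q.1 ≠ i} => ℝ) (kap i)
    have m3 := (MeasurePreserving.id (volume : Measure ({q : Fin n × Fin 2 // q.1 ≠ i} → ℝ))).prod
      (m2.comp m1)
    have m4 := (volume_preserving_piEquivPiSubtypeProd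
      (fun _ : Fin n × Fin 2 => ℝ) (fun q => q.1 ≠ i)).symm _
    have m5 := (EuclideanSpace.volume_preserving_symm_measurableEquiv_toLp (Fin n × Fin 2)).symm _
    exact m5.comp (m4.comp m3)
  have hj0 : ((j, (0:Fin 2)) : Fin n × Fin 2).1 ≠ i := Ne.symm hij
  have hj1 : ((j, (1:Fin 2)) : Fin n × Fin 2).1 ≠ i := Ne.symm hij
  have hcoord : ∀ (y : {q : Fin n × Fin 2 // q.1 ≠ i} → ℝ) (z : ℝ × ℝ) (q : Fin n × Fin 2),
      T (y, z) q = if h : q.1 ≠ i then y ⟨q, h⟩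
        else (MeasurableEquiv.piCongrLeft (fun _ : {q : Fin n × Fin 2 // ¬ q.1 ≠ i} => ℝ)
          (kap i) (MeasurableEquiv.finTwoArrow.symm z)) ⟨q, h⟩ := by
    intro y z q
    rfl
  have hcoord_j : ∀ (y : {q : Fin n × Fin 2 // q.1 ≠ i} → ℝ) (z : ℝ × ℝ) (k : Fin 2)
      (h : ((j, k) : Fin n × Fin 2).1 ≠ i), T (y, z) (j, k) = y ⟨(j, k), h⟩ := by
    intro y z k h
    rw [hcoord, dif_pos h]
  have hcoord_i : ∀ (y : {q : Fin n × Fin 2 // q.1 ≠ i} → ℝ) (z : ℝ × ℝ) (k : Fin 2),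
      T (y, z) (i, k) = (MeasurableEquiv.finTwoArrow.symm z : Fin 2 → ℝ) k := by
    intro y z k
    rw [hcoord, dif_neg (by simp)]
    have : (⟨(i, k), by simp⟩ : {q : Fin n × Fin 2 // ¬ q.1 ≠ i}) = kap i k := rfl
    rw [this, MeasurableEquiv.piCongrLeft_apply_apply]
  have hfin2 : ∀ z : ℝ × ℝ, ((MeasurableEquiv.finTwoArrow.symm z : Fin 2 → ℝ) 0 = z.1)
      ∧ ((MeasurableEquiv.finTwoArrow.symm z : Fin 2 → ℝ) 1 = z.2) := by
    intro z
    constructor <;> rfl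
  have hpd : ∀ (y : {q : Fin n × Fin 2 // q.1 ≠ i} → ℝ) (z : ℝ × ℝ),
      pd (T (y, z)) i j = Real.sqrt ((z.1 - y ⟨(j, 0), hj0⟩)^2 + (z.2 - y ⟨(j, 1), hj1⟩)^2) := by
    intro y z
    rw [pd, Fin.sum_univ_two, hcoord_i, hcoord_i, hcoord_j y z 0 hj0, hcoord_j y z 1 hj1,
      (hfin2 z).1, (hfin2 z).2]
  have hsub : ∀ (y : {q : Fin n × Fin 2 // q.1 ≠ i} → ℝ) (z : ℝ × ℝ),
      (∑ q : {q : Fin n × Fin 2 // q.1 ≠ i}, (y q)^2) ≤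
        ∑ q : Fin n × Fin 2, (T (y, z) q)^2 := by
    intro y z
    have h0 : ∀ q : {q : Fin n × Fin 2 // q.1 ≠ i}, (y q)^2 = (T (y, z) q.1)^2 := by
      intro q
      rw [hcoord, dif_pos q.2]
    calc (∑ q : {q : Fin n × Fin 2 // q.1 ≠ i}, (y q)^2)
        = ∑ q : {q : Fin n × Fin 2 // q.1 ≠ i}, (T (y, z) q.1)^2 :=
          Finset.sum_congr rfl fun q _ => h0 q
      _ = ∑ q ∈ Finset.univ.filter (fun q : Fin n × Fin 2 => q.1 ≠ i), (T (y, z) q)^2 := by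
          symm
          refine Finset.sum_subtype _ ?_ _
          intro q
          simp
      _ ≤ ∑ q : Fin n × Fin 2, (T (y, z) q)^2 :=
          Finset.sum_le_sum_of_subset_of_nonneg (Finset.filter_subset _ _)
            (fun q _ _ => sq_nonneg _)
  have hnormsq : ∀ a : Conf n, ‖a‖^2 = ∑ q : Fin n × Fin 2, (a q)^2 := by
    intro a
    rw [EuclideanSpace.norm_eq, Real.sq_sqrt (Finset.sum_nonneg fun q _ => sq_nonneg _)]
    exact Finset.sum_congr rfl fun q _ => by rw [Real.norm_eq_abs, sq_abs]
  have hzero : ∀ (y : {q : Fin n × Fin 2 // q.1 ≠ i} → ℝ), y ∉ S' → ∀ z : ℝ × ℝ,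
      G (T (y, z)) = 0 := by
    intro y hy z
    rw [hG, Set.indicator_of_notMem]
    intro hball
    rw [mem_ball_zero_iff] at hball
    have hr : 0 < r := lt_of_le_of_lt (norm_nonneg _) hball
    have h2 : ‖T (y, z)‖^2 < r^2 := by
      have := pow_lt_pow_left₀ hball (norm_nonneg _) (by norm_num : 2 ≠ 0)
      exact this
    rw [hnormsq] at h2
    have h3 : r^2 ≤ ∑ q : {q : Fin n × Fin 2 // q.1 ≠ i}, (y q)^2 := le_of_not_gt hy
    linarith [hsub y z]
  calc ∫⁻ a in Metric.ball (0 : Conf n) r, ENNReal.ofReal (-Real.log (pd a i j))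
      = ∫⁻ a, G a := (lintegral_indicator measurableSet_ball _).symm
    _ = ∫⁻ w : ({q : Fin n × Fin 2 // q.1 ≠ i} → ℝ) × (ℝ × ℝ), G (T w) :=
        (hT.lintegral_comp hGmeas).symm
    _ = ∫⁻ y, ∫⁻ z : ℝ × ℝ, G (T (y, z)) := by
        have hm : Measurable fun w : ({q : Fin n × Fin 2 // q.1 ≠ i} → ℝ) × (ℝ × ℝ) =>
            G (T w) := hGmeas.comp hT.measurable
        rw [Measure.volume_eq_prod, lintegral_prod _ hm.aemeasurable]
    _ ≤ ∫⁻ y, S'.indicator (fun _ => (16 : ℝ≥0∞)) y := by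
        refine lintegral_mono fun y => ?_
        by_cases hy : y ∈ S'
        · rw [Set.indicator_of_mem hy]
          calc ∫⁻ z : ℝ × ℝ, G (T (y, z))
              ≤ ∫⁻ z : ℝ × ℝ, ENNReal.ofReal (-Real.log (pd (T (y, z)) i j)) :=
                lintegral_mono fun z => Set.indicator_le_self _ _ _
            _ = ∫⁻ z : ℝ × ℝ, ENNReal.ofReal (-Real.log (Real.sqrt
                  ((z.1 - y ⟨(j, 0), hj0⟩)^2 + (z.2 - y ⟨(j, 1), hj1⟩)^2))) := by
                refine lintegral_congr fun z => ?_
                rw [hpd]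
            _ ≤ 16 := l2 _ _
        · rw [Set.indicator_of_notMem hy]
          have : (fun z : ℝ × ℝ => G (T (y, z))) = fun _ => 0 := funext (hzero y hy)
          rw [this, lintegral_zero]
    _ = 16 * volume S' := lintegral_indicator_const hS'meas 16


def kap2 {n : ℕ} (i : Fin n) : Fin 2 ≃ {q : Fin n × Fin 2 // q.1 = i} where
  toFun k := ⟨(i, k), rfl⟩
  invFun q := q.1.2
  left_inv k := rfl
  right_inv q := by
    rcases q with ⟨⟨a, b⟩, h⟩
    subst h
    rfl

lemma card_sub {n : ℕ} (i : Fin n) :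
    Fintype.card {q : Fin n × Fin 2 // q.1 ≠ i} = n * 2 - 2 := by
  have h1 : Fintype.card {q : Fin n × Fin 2 // q.1 = i} = 2 :=
    (Fintype.card_congr (kap2 i).symm).trans (Fintype.card_fin 2)
  have h2 := Fintype.card_subtype_compl (fun q : Fin n × Fin 2 => q.1 = i)
  rw [h1] at h2
  simpa [Fintype.card_prod] using h2

lemma Vi_eq {n : ℕ} (i j : Fin n) (hij : i ≠ j) (r : ℝ) (hr : 0 < r) :
    volume {y : {q : Fin n × Fin 2 // q.1 ≠ i} → ℝ | ∑ q, (y q)^2 < r^2} =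
      ENNReal.ofReal r ^ (n*2-2) *
        ENNReal.ofReal (Real.sqrt Real.pi ^ (n*2-2) / Real.Gamma ((n*2-2 : ℕ) / 2 + 1)) := by
  classical
  have : Nonempty {q : Fin n × Fin 2 // q.1 ≠ i} := ⟨⟨(j, 0), Ne.symm hij⟩⟩
  have hS'meas : MeasurableSet {y : {q : Fin n × Fin 2 // q.1 ≠ i} → ℝ | ∑ q, (y q)^2 < r^2} :=
    measurableSet_lt (Finset.measurable_sum _ fun q _ => (measurable_pi_apply q).pow_const 2)
      measurable_const
  have hmp := EuclideanSpace.volume_preserving_symm_measurableEquiv_toLp {q : Fin n × Fin 2 // q.1 ≠ i}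
  have hpre : ((MeasurableEquiv.toLp 2 ({q : Fin n × Fin 2 // q.1 ≠ i} → ℝ)).symm) ⁻¹'
      {y | ∑ q, (y q)^2 < r^2} =
      Metric.ball (0 : EuclideanSpace ℝ {q : Fin n × Fin 2 // q.1 ≠ i}) r := by
    ext v
    simp only [Set.mem_preimage, Set.mem_setOf_eq, mem_ball_zero_iff]
    rw [EuclideanSpace.norm_eq, Real.sqrt_lt' hr]
    have hsum : (∑ q : {q : Fin n × Fin 2 // q.1 ≠ i},
        (((MeasurableEquiv.toLp 2 ({q : Fin n × Fin 2 // q.1 ≠ i} → ℝ)).symm v) q)^2 : ℝ) = ∑ q, ‖v q‖^2 :=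
      Finset.sum_congr rfl fun q _ => by rw [Real.norm_eq_abs, sq_abs]; rfl
    rw [hsum]
  rw [← hmp.measure_preimage hS'meas.nullMeasurableSet, hpre,
    EuclideanSpace.volume_ball, card_sub]


lemma ofReal_sum_le {α : Type*} (s : Finset α) (f : α → ℝ) :
    ENNReal.ofReal (∑ x ∈ s, f x) ≤ ∑ x ∈ s, ENNReal.ofReal (f x) := by
  induction s using Finset.cons_induction with
  | empty => simp
  | cons a s ha ih =>
      rw [Finset.sum_cons, Finset.sum_cons]
      exact le_trans ENNReal.ofReal_add_le (add_le_add_right ih _)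

/-- for `M` large (depending on `R`) and `n` large, `A(n,M,R)` fills at
least half of the ball `B^{2n}_{R√n}`. -/
theorem statement16 (R : ℝ) (hR : 0 < R) :
    ∃ M₀ : ℝ, 0 < M₀ ∧ ∀ M : ℝ, M₀ ≤ M → ∃ N : ℕ, ∀ n : ℕ, N ≤ n →
      volume (Metric.ball (0 : Conf n) (R * Real.sqrt n)) ≤ 2 * volume (Aset n M R) := by
  classical
  refine ⟨32 / R^2, by positivity, fun M hM => ⟨2, fun n hn => ?_⟩⟩
  obtain ⟨m, rfl⟩ : ∃ m, n = m + 1 := ⟨n - 1, by omega⟩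
  set n := m + 1 with hn_def
  have hm1 : 1 ≤ m := by omega
  have hn0 : 0 < (n:ℝ) := by positivity
  have hM0 : 0 < M := lt_of_lt_of_le (by positivity) hM
  set r : ℝ := R * Real.sqrt n with hrdef
  have hr : 0 < r := mul_pos hR (Real.sqrt_pos.mpr hn0)
  have hr2 : r^2 = R^2 * n := by
    rw [mul_pow, Real.sq_sqrt hn0.le]
  clear_value n
  have hrpos := hr
  clear_value r
  set B := Metric.ball (0 : Conf n) r with hB
  have : Nonempty (Fin n × Fin 2) := ⟨(⟨0, by omega⟩, 0)⟩
  set F : Conf n → ℝ≥0∞ := fun a => ∑ i : Fin n, ∑ j : Fin n,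
    (if i ≠ j then ENNReal.ofReal (-Real.log (pd a i j)) else 0) with hF
  have hterm : ∀ i j : Fin n, Measurable fun a : Conf n =>
      (if i ≠ j then ENNReal.ofReal (-Real.log (pd a i j)) else 0 : ℝ≥0∞) := by
    intro i j
    by_cases h : i ≠ j
    · simpa [h] using pd_measurable i j
    · simp [h]
  have hFmeas : Measurable F :=
    Finset.measurable_sum _ fun i _ => Finset.measurable_sum _ fun j _ => hterm i j
  have hnn1 : (0:ℝ) < (n:ℝ) * ((n:ℝ)-1) := by
    have h2n : (2:ℝ) ≤ (n:ℝ) := by exact_mod_cast hn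
    nlinarith
  set ε : ℝ≥0∞ := ENNReal.ofReal ((n:ℝ) * ((n:ℝ)-1) * M) with hε
  have hε0 : ε ≠ 0 := by
    rw [hε, ne_eq, ENNReal.ofReal_eq_zero, not_le]
    positivity
  have hεtop : ε ≠ ∞ := ENNReal.ofReal_ne_top
  -- Step 1 : B is covered by Aset and the bad set
  have h1 : volume B ≤ volume (Aset n M R) + volume ({a : Conf n | ε ≤ F a} ∩ B) := by
    refine le_trans (measure_mono ?_) (measure_union_le _ _)
    intro a haB
    by_cases haA : a ∈ Aset n M R
    · exact Or.inl haA
    · refine Or.inr ⟨?_, haB⟩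
      have hc1 : (∑ i : Fin n, ∑ k : Fin 2, (a (i,k))^2) ≤ (n:ℝ) * R^2 := by
        have hnorm : ‖a‖ < r := mem_ball_zero_iff.mp haB
        have h2 : ‖a‖^2 < r^2 := by
          have := pow_lt_pow_left₀ hnorm (norm_nonneg _) (by norm_num : 2 ≠ 0)
          exact this
        have h3 : ‖a‖^2 = ∑ q : Fin n × Fin 2, (a q)^2 := by
          rw [EuclideanSpace.norm_eq, Real.sq_sqrt (Finset.sum_nonneg fun q _ => sq_nonneg _)]
          exact Finset.sum_congr rfl fun q _ => by rw [Real.norm_eq_abs, sq_abs]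
        rw [h3, Fintype.sum_prod_type] at h2
        rw [hr2] at h2
        linarith
      have hc2 : ¬ (-(∑ i : Fin n, ∑ j : Fin n, if i ≠ j then Real.log (pd a i j) else 0) ≤
          (n:ℝ) * ((n:ℝ)-1) * M) := by
        intro hc
        exact haA ⟨hc1, hc⟩
      push_neg at hc2
      -- ε ≤ F a
      have hneg : -(∑ i : Fin n, ∑ j : Fin n, if i ≠ j then Real.log (pd a i j) else 0) =
          ∑ i : Fin n, ∑ j : Fin n, (if i ≠ j then -Real.log (pd a i j) else 0) := by
        rw [← Finset.sum_neg_distrib]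
        refine Finset.sum_congr rfl fun i _ => ?_
        rw [← Finset.sum_neg_distrib]
        refine Finset.sum_congr rfl fun j _ => ?_
        split_ifs <;> simp
      rw [Set.mem_setOf_eq, hε]
      calc ENNReal.ofReal ((n:ℝ) * ((n:ℝ)-1) * M)
          ≤ ENNReal.ofReal (∑ i : Fin n, ∑ j : Fin n,
              (if i ≠ j then -Real.log (pd a i j) else 0)) := by
            refine ENNReal.ofReal_le_ofReal ?_
            rw [← hneg]
            exact hc2.le
        _ ≤ ∑ i : Fin n, ENNReal.ofReal (∑ j : Fin n,
              (if i ≠ j then -Real.log (pd a i j) else 0)) := ofReal_sum_le _ _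
        _ ≤ ∑ i : Fin n, ∑ j : Fin n, ENNReal.ofReal
              (if i ≠ j then -Real.log (pd a i j) else 0) :=
            Finset.sum_le_sum fun i _ => ofReal_sum_le _ _
        _ = F a := by
            rw [hF]
            refine Finset.sum_congr rfl fun i _ => Finset.sum_congr rfl fun j _ => ?_
            split_ifs <;> simp
  -- Step 2 : Markov
  have h2 : volume ({a : Conf n | ε ≤ F a} ∩ B) ≤ (∫⁻ a in B, F a) / ε := by
    rw [← Measure.restrict_apply' measurableSet_ball]
    exact meas_ge_le_lintegral_div hFmeas.aemeasurable hε0 hεtop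
  -- Step 3 : integral bound
  set C : ℝ≥0∞ := ENNReal.ofReal r ^ (n*2-2) *
    ENNReal.ofReal (Real.sqrt Real.pi ^ (n*2-2) / Real.Gamma ((n*2-2 : ℕ) / 2 + 1)) with hC
  have h3 : (∫⁻ a in B, F a) ≤ ((n*(n-1) : ℕ) : ℝ≥0∞) * (16 * C) := by
    rw [hF, lintegral_finset_sum _ (fun i _ => Finset.measurable_sum _ fun j _ => hterm i j)]
    calc ∑ i : Fin n, ∫⁻ a in B, ∑ j : Fin n,
          (if i ≠ j then ENNReal.ofReal (-Real.log (pd a i j)) else 0)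
        = ∑ i : Fin n, ∑ j : Fin n, ∫⁻ a in B,
            (if i ≠ j then ENNReal.ofReal (-Real.log (pd a i j)) else 0) :=
          Finset.sum_congr rfl fun i _ =>
            lintegral_finset_sum _ (fun j _ => hterm i j)
      _ ≤ ∑ i : Fin n, ∑ j : Fin n, (if i ≠ j then 16 * C else 0) := by
          refine Finset.sum_le_sum fun i _ => Finset.sum_le_sum fun j _ => ?_
          by_cases h : i ≠ j
          · simp only [if_pos h]
            calc ∫⁻ a in B, ENNReal.ofReal (-Real.log (pd a i j))
                ≤ 16 * volume {y : {q : Fin n × Fin 2 // q.1 ≠ i} → ℝ | ∑ q, (y q)^2 < r^2} :=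
                  pair_bound i j h r
              _ = 16 * C := by rw [Vi_eq i j h r hr, hC]
          · simp [h]
      _ = ((n*(n-1) : ℕ) : ℝ≥0∞) * (16 * C) := by
          have hrow : ∀ i : Fin n, (∑ j : Fin n, (if i ≠ j then (16 * C : ℝ≥0∞) else 0))
              = ((n-1 : ℕ) : ℝ≥0∞) * (16 * C) := by
            intro i
            rw [← Finset.sum_filter, Finset.filter_ne, Finset.sum_const,
              Finset.card_erase_of_mem (Finset.mem_univ i), Finset.card_univ,
              Fintype.card_fin, nsmul_eq_mul]
          rw [Finset.sum_congr rfl fun i _ => hrow i, Finset.sum_const, Finset.card_univ,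
            Fintype.card_fin, nsmul_eq_mul, ← mul_assoc, ← Nat.cast_mul]
  -- Step 4 : the key numeric inequality
  have hVB : volume B = ENNReal.ofReal r ^ (n*2) *
      ENNReal.ofReal (Real.sqrt Real.pi ^ (n*2) / Real.Gamma ((n*2 : ℕ) / 2 + 1)) := by
    rw [hB, EuclideanSpace.volume_ball]
    simp [Fintype.card_prod, Fintype.card_fin]
  have hkey : 2 * (((n*(n-1) : ℕ) : ℝ≥0∞) * (16 * C)) ≤ volume B * ε := by
    have he1 : n*2 - 2 = m*2 := by omega
    have he2 : n*2 = m*2 + 2 := by omega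
    have hΓ2 : Real.Gamma (((n*2-2 : ℕ) : ℝ)/2 + 1) = (Nat.factorial m) := by
      rw [he1]
      have : ((m*2 : ℕ) : ℝ)/2 + 1 = (m:ℝ) + 1 := by push_cast; ring
      rw [this, Real.Gamma_nat_eq_factorial]
    have hΓ1 : Real.Gamma (((n*2 : ℕ) : ℝ)/2 + 1) = (Nat.factorial n) := by
      have : ((n*2 : ℕ) : ℝ)/2 + 1 = (n:ℝ) + 1 := by push_cast; ring
      rw [this, Real.Gamma_nat_eq_factorial]
    rw [hVB, hC, hε, hΓ1, hΓ2, he1, he2]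
    have hnm : (n:ℝ) = (m:ℝ) + 1 := by rw [hn_def]; push_cast; ring
    have hcast : ((n*(n-1) : ℕ) : ℝ) = (n:ℝ) * ((n:ℝ) - 1) := by
      have h' : n - 1 = m := by omega
      rw [h']
      push_cast
      rw [hnm]
      ring
    have hmfac : ((Nat.factorial m) : ℝ) ≠ 0 := Nat.cast_ne_zero.mpr (Nat.factorial_ne_zero m)
    have hn0' : (n:ℝ) ≠ 0 := ne_of_gt hn0
    have eqL : 2 * (((n*(n-1) : ℕ) : ℝ≥0∞) * (16 * (ENNReal.ofReal r ^ (m*2) *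
        ENNReal.ofReal (Real.sqrt Real.pi ^ (m*2) / (Nat.factorial m))))) =
        ENNReal.ofReal ((2 * ((n*(n-1) : ℕ) : ℝ) * 16) *
          (r^(m*2) * (Real.sqrt Real.pi ^ (m*2) / (Nat.factorial m)))) := by
      rw [ENNReal.ofReal_mul (by positivity), ENNReal.ofReal_mul (by positivity),
        ENNReal.ofReal_mul (by positivity),
        ENNReal.ofReal_mul (pow_nonneg hr.le (m*2)), ENNReal.ofReal_pow hr.le,
        ENNReal.ofReal_natCast, ENNReal.ofReal_ofNat, ENNReal.ofReal_ofNat]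
      ring
    have eqR : ENNReal.ofReal ((r^(m*2+2) * (Real.sqrt Real.pi ^ (m*2+2) / ((Nat.factorial n) : ℝ))) *
        ((n:ℝ) * ((n:ℝ)-1) * M)) =
        ENNReal.ofReal r ^ (m*2+2) *
          ENNReal.ofReal (Real.sqrt Real.pi ^ (m*2+2) / ((Nat.factorial n) : ℝ)) *
          ENNReal.ofReal ((n:ℝ) * ((n:ℝ)-1) * M) := by
      rw [ENNReal.ofReal_mul (by positivity), ENNReal.ofReal_mul (by positivity),
        ENNReal.ofReal_pow hr.le]
    rw [eqL, ← eqR]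
    refine ENNReal.ofReal_le_ofReal ?_
    -- real inequality
    have hpow_r : r^(m*2+2) = r^(m*2) * r^2 := by rw [pow_add]
    have hpow_pi : Real.sqrt Real.pi ^ (m*2+2) = Real.sqrt Real.pi ^ (m*2) * Real.pi := by
      rw [pow_add, Real.sq_sqrt Real.pi_pos.le]
    have hfact : ((Nat.factorial n) : ℝ) = (n:ℝ) * ((Nat.factorial m) : ℝ) := by
      rw [hn_def, Nat.factorial_succ]
      push_cast
      ring
    have hRM : 32 ≤ R^2 * M := by
      have := (div_le_iff₀ (by positivity : (0:ℝ) < R^2)).mp hM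
      linarith
    have h32 : (32:ℝ) ≤ Real.pi * (R^2 * M) := by
      nlinarith [Real.pi_gt_three, hM0, hR, sq_nonneg R]
    have hD : (0:ℝ) ≤ r^(m*2) * Real.sqrt Real.pi ^ (m*2) / ((Nat.factorial m) : ℝ) *
        ((n:ℝ) * ((n:ℝ)-1)) := by
      refine mul_nonneg (by positivity) hnn1.le
    have main : (2 * ((n*(n-1) : ℕ) : ℝ) * 16) *
        (r^(m*2) * (Real.sqrt Real.pi ^ (m*2) / ((Nat.factorial m) : ℝ))) =
        (r^(m*2) * Real.sqrt Real.pi ^ (m*2) / ((Nat.factorial m) : ℝ) * ((n:ℝ) * ((n:ℝ)-1))) * 32 := by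
      rw [hcast]; ring
    have main2 : (r^(m*2+2) * (Real.sqrt Real.pi ^ (m*2+2) / ((Nat.factorial n) : ℝ))) *
        ((n:ℝ) * ((n:ℝ)-1) * M) =
        (r^(m*2) * Real.sqrt Real.pi ^ (m*2) / ((Nat.factorial m) : ℝ) * ((n:ℝ) * ((n:ℝ)-1))) *
          (Real.pi * (R^2 * M)) := by
      rw [hpow_r, hpow_pi, hfact, hr2]
      field_simp
    rw [main, main2]
    exact mul_le_mul_of_nonneg_left h32 hD
  -- Step 5 : conclusion
  have h4 : 2 * volume ({a : Conf n | ε ≤ F a} ∩ B) ≤ volume B := by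
    calc 2 * volume ({a : Conf n | ε ≤ F a} ∩ B)
        ≤ 2 * ((((n*(n-1) : ℕ) : ℝ≥0∞) * (16 * C)) / ε) :=
          mul_le_mul_right (le_trans h2 (ENNReal.div_le_div_right h3 ε)) 2
      _ = (2 * (((n*(n-1) : ℕ) : ℝ≥0∞) * (16 * C))) / ε := by
          rw [← mul_div_assoc]
      _ ≤ volume B := by
          rw [ENNReal.div_le_iff_le_mul (Or.inl hε0) (Or.inl hεtop)]
          exact hkey
  have hfin : volume B ≠ ∞ := measure_ball_lt_top.ne
  have h5 : volume B + volume B ≤ 2 * volume (Aset n M R) + volume B := by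
    calc volume B + volume B = 2 * volume B := (two_mul _).symm
      _ ≤ 2 * (volume (Aset n M R) + volume ({a : Conf n | ε ≤ F a} ∩ B)) :=
          mul_le_mul_right h1 2
      _ = 2 * volume (Aset n M R) + 2 * volume ({a : Conf n | ε ≤ F a} ∩ B) := by
          rw [mul_add]
      _ ≤ 2 * volume (Aset n M R) + volume B := add_le_add_right h4 _
  exact (ENNReal.add_le_add_iff_right hfin).mp h5
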